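/- For X uniform on [X̲, X̄] with silence set [X̲, b] where b ≥ max(3π^R, X̲ + 2π^R), the manager's optimal silence report is r₀ = b - π^R, and the auditor's expected loss ∫_{b-2π^R}^{b} (b - π^R - x)² dx / (X̄ - X̲) + (X̄ - X̲ - 2π^R)(π^R)²/(X̄ - X̲) is constant in b; in particular equal to [2(π^R)³/3 + (X̄ - X̲ - 2π^R)(π^R)²]/(X̄ - X̲). -/

import Mathlib

/-- For `X` uniform on `[X̲, X̄]` with silence set `[X̲, b]` where
`b ≥ max (3π^R) (X̲ + 2π^R)`: the manager's optimal silence report is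
`r₀ = b - π^R`, and the auditor's expected loss equals
`(2(π^R)³/3 + (X̄ - X̲ - 2π^R)(π^R)²)/(X̄ - X̲)`, a constant in `b`. -/
theorem stmt8 (Xl Xh π b : ℝ) (hπ : 0 < π) (hXl : 0 ≤ Xl)
    (hlen : 2 * π < Xh - Xl) (hb1 : 3 * π ≤ b) (hb2 : Xl + 2 * π ≤ b)
    (hbX : b ≤ Xh) :
    (∀ r : ℝ, 0 ≤ r →
      r * (max 0 (min (r + π) b - max (r - π) Xl) / (b - Xl)) ≤
        (b - π) * (max 0 (min ((b - π) + π) b - max ((b - π) - π) Xl) / (b - Xl))) ∧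
    (∫ x in (b - 2 * π)..b, (b - π - x)^2) / (Xh - Xl)
        + (Xh - Xl - 2 * π) * π^2 / (Xh - Xl)
      = (2 * π^3 / 3 + (Xh - Xl - 2 * π) * π^2) / (Xh - Xl) := by
  have hbXl : 0 < b - Xl := by linarith
  constructor
  · intro r hr
    have h1 : (b - π) + π = b := by ring
    have h2 : max ((b - π) - π) Xl = b - 2 * π := by
      rw [max_eq_left]; · ring
      linarith
    rw [h1, min_self, h2]
    have h3 : max 0 (b - (b - 2 * π)) = 2 * π := by
      rw [max_eq_right] <;> linarith
    rw [h3]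
    rw [mul_div_assoc'] at *
    rw [mul_div_assoc']
    apply div_le_div_of_nonneg_right _ hbXl.le
    -- main inequality: r * max 0 (min (r+π) b - max (r-π) Xl) ≤ (b-π) * (2π)
    rcases le_or_gt r (b - π) with hc | hc
    · have hM : max 0 (min (r + π) b - max (r - π) Xl) ≤ 2 * π := by
        apply max_le (by linarith)
        have := min_le_left (r + π) b
        have := le_max_left (r - π) Xl
        linarith
      have hM0 : (0:ℝ) ≤ max 0 (min (r + π) b - max (r - π) Xl) := le_max_left _ _
      exact mul_le_mul hc hM hM0 (by linarith)
    · have hmax : max (r - π) Xl = r - π := max_eq_left (by linarith)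
      rw [hmax]
      have hmin : min (r + π) b ≤ b := min_le_right _ _
      rcases le_or_gt (min (r + π) b - (r - π)) 0 with hm | hm
      · rw [max_eq_left hm]
        nlinarith
      · rw [max_eq_right hm.le]
        nlinarith [mul_le_mul_of_nonneg_left hmin hr]
  · have key : (∫ x in (b - 2 * π)..b, (b - π - x)^2) = 2 * π^3 / 3 := by
      have hrw : ∀ x : ℝ, (b - π - x)^2 = (x - (b - π))^2 := fun x => by ring
      simp_rw [hrw]
      rw [intervalIntegral.integral_comp_sub_right (fun y => y^2) (b - π),
        integral_pow]
      norm_num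
      ring
    rw [key, ← add_div]
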